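/- Let f : F^n → F be in layered canalizing form with r layers of sizes k_1, …, k_r and canalizing input sets S_{i,j}, and let x_s be the s-th variable of the ℓ-th layer (1 ≤ ℓ ≤ r) with canalizing input set S_{ℓ,s} satisfying 0 ∉ S_{ℓ,s}. Then the number of transitions changed by deleting x_s satisfies #{x ∈ F^n : f(x_1, …, x_{s−1}, 0, x_{s+1}, …, x_n) ≠ f(x)} ≤ p^{n − (k_1 + ⋯ + k_ℓ)} · (∏_{i=1}^{ℓ−1} ∏_{j=1}^{k_i} (p − |S_{i,j}|)) · (∏_{j=1, j ≠ s}^{k_ℓ} (p − |S_{ℓ,j}|)) · |S_{ℓ,s}|. -/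

import Mathlib

open Finset

/-- Indicator function of the complement of `S`: `Qt S x = 1` if `x ∉ S`, `0` if `x ∈ S`. -/
def Qt {F : Type*} [Fintype F] [DecidableEq F] [Zero F] [One F] (S : Finset F) (x : F) : F :=
  if x ∈ S then 0 else 1

/-- `g` actually depends on (is essential in) its `i`-th variable. -/
def FnDependsOn {F : Type*} (n : ℕ) (g : (Fin n → F) → F) (i : Fin n) : Prop :=
  ∃ x y : Fin n → F, (∀ j, j ≠ i → x j = y j) ∧ g x ≠ g y

/-- `g` is canalizing in its `i`-th variable with canalizing input set `S`
(a nonempty proper subset of `F`) and canalizing output `b`. -/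
def Canalizing {F : Type*} [Fintype F] [DecidableEq F] (n : ℕ) (g : (Fin n → F) → F)
    (i : Fin n) (S : Finset F) (b : F) : Prop :=
  S.Nonempty ∧ S ≠ Finset.univ ∧ ∀ x : Fin n → F, x i ∈ S → g x = b

/-- `f` is 1-canalizing in its `i`-th variable with canalizing input set `S`
(a nonempty proper subset of `F`) and canalizing output `b`: `f = b` whenever `x i ∈ S`,
and on `x i ∉ S` the value of `f` is given by a single function of the remaining variables
which is not identically `b`. -/
def OneCanalizing {F : Type*} [Fintype F] [DecidableEq F] (n : ℕ) (f : (Fin n → F) → F)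
    (i : Fin n) (S : Finset F) (b : F) : Prop :=
  S.Nonempty ∧ S ≠ Finset.univ ∧
  (∀ x : Fin n → F, x i ∈ S → f x = b) ∧
  (∀ x y : Fin n → F, x i ∉ S → y i ∉ S → (∀ j, j ≠ i → x j = y j) → f x = f y) ∧
  (∃ x : Fin n → F, x i ∉ S ∧ f x ≠ b)

/-- Nested evaluation `M₁(M₂(⋯(M_r · P + B_r)⋯) + B₂) + B₁`. -/
def nestEval {F : Type*} [Mul F] [Add F] : List (F × F) → F → F
  | [], P => P
  | (m, b) :: t, P => m * nestEval t P + b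

/-- Layered canalizing form data for a function of `n` variables with `r ≥ 1` layers:
pairwise disjoint layer blocks, nonempty proper canalizing input sets for the
layer variables, layer constants `B` with the last one nonzero, and a core function
`P_C` of the remaining variables having no 1-canalizing variables. -/
structure LayeredForm (F : Type*) [Field F] [Fintype F] [DecidableEq F] (n r : ℕ) where
  hr : 0 < r
  layer : Fin r → Finset (Fin n)
  disj : ∀ i j : Fin r, i ≠ j → Disjoint (layer i) (layer j)
  S : Fin n → Finset F
  Sne : ∀ i : Fin r, ∀ v ∈ layer i, (S v).Nonempty
  Spr : ∀ i : Fin r, ∀ v ∈ layer i, S v ≠ Finset.univ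
  B : Fin r → F
  Blast : B ⟨r - 1, Nat.sub_lt hr Nat.one_pos⟩ ≠ 0
  PC : (Fin n → F) → F
  PCvars : ∀ i : Fin r, ∀ v ∈ layer i, ¬ FnDependsOn n PC v
  PCnc : ¬ ∃ (v : Fin n) (S' : Finset F) (b : F), OneCanalizing n PC v S' b

/-- The product `M_i = ∏_{v ∈ L_i} Q̃_{S_v}(x_v)` over the `i`-th layer. -/
def LayeredForm.M {F : Type*} [Field F] [Fintype F] [DecidableEq F] {n r : ℕ}
    (L : LayeredForm F n r) (i : Fin r) (x : Fin n → F) : F :=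
  ∏ v ∈ L.layer i, Qt (L.S v) (x v)

/-- The function determined by a layered canalizing form:
`f(x) = M₁(M₂(⋯(M_r · P_C + B_r)⋯) + B₂) + B₁`. -/
def LayeredForm.eval {F : Type*} [Field F] [Fintype F] [DecidableEq F] {n r : ℕ}
    (L : LayeredForm F n r) (x : Fin n → F) : F :=
  nestEval (List.ofFn fun i => (L.M i x, L.B i)) (L.PC x)

/-- The number of state-space transitions changed when the input `s` of `f`
is replaced by the constant `a` (edge deletion when `a = 0`). -/
def chCount {F : Type*} [Fintype F] [DecidableEq F] {n : ℕ}
    (f : (Fin n → F) → F) (s : Fin n) (a : F) : ℕ :=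
  (Finset.univ.filter fun x : Fin n → F => f (Function.update x s a) ≠ f x).card

section Aux

variable {F : Type*} [Field F] [Fintype F] [DecidableEq F] {n r : ℕ}

lemma nest_congr : ∀ (k : ℕ) (l₁ l₂ : List (F × F)) (b : F) (P₁ P₂ : F),
    (∀ j, j < k → l₁[j]? = l₂[j]?) →
    l₁[k]? = some (0, b) → l₂[k]? = some (0, b) →
    nestEval l₁ P₁ = nestEval l₂ P₂ := by
  intro k
  induction k with
  | zero =>
    intro l₁ l₂ b P₁ P₂ _ h1 h2
    match l₁, l₂ with
    | (m₁, b₁) :: t₁, (m₂, b₂) :: t₂ =>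
      simp only [List.getElem?_cons_zero, Option.some.injEq, Prod.mk.injEq] at h1 h2
      simp [nestEval, h1.1, h1.2, h2.1, h2.2]
  | succ k ih =>
    intro l₁ l₂ b P₁ P₂ hpre h1 h2
    match l₁, l₂ with
    | (m₁, b₁) :: t₁, (m₂, b₂) :: t₂ =>
      have h0 := hpre 0 (Nat.succ_pos k)
      simp only [List.getElem?_cons_zero, Option.some.injEq, Prod.mk.injEq] at h0
      have htail : nestEval t₁ P₁ = nestEval t₂ P₂ := by
        refine ih t₁ t₂ b P₁ P₂ (fun j hj => ?_) ?_ ?_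
        · have := hpre (j + 1) (by omega)
          simpa using this
        · simpa using h1
        · simpa using h2
      simp [nestEval, htail, h0.1, h0.2]

lemma PC_update (L : LayeredForm F n r) (ℓ : Fin r) (s : Fin n) (hs : s ∈ L.layer ℓ)
    (x : Fin n → F) : L.PC (Function.update x s 0) = L.PC x := by
  by_contra h
  exact L.PCvars ℓ s hs ⟨Function.update x s 0, x,
    fun j hj => Function.update_of_ne hj _ _, h⟩

lemma M_update_of_ne (L : LayeredForm F n r) (ℓ : Fin r) (s : Fin n) (hs : s ∈ L.layer ℓ)
    (x : Fin n → F) (i : Fin r) (hi : i ≠ ℓ) :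
    L.M i (Function.update x s 0) = L.M i x := by
  refine Finset.prod_congr rfl fun v hv => ?_
  have hvs : v ≠ s := by
    intro h; subst h
    exact (Finset.disjoint_left.mp (L.disj i ℓ hi)) hv hs
  rw [Function.update_of_ne hvs]

lemma M_eq_zero (L : LayeredForm F n r) (i : Fin r) (x : Fin n → F) (v : Fin n)
    (hv : v ∈ L.layer i) (hx : x v ∈ L.S v) : L.M i x = 0 :=
  Finset.prod_eq_zero hv (by simp [Qt, hx])

lemma eval_update_eq_of_not_mem (L : LayeredForm F n r) (ℓ : Fin r) (s : Fin n)
    (hs : s ∈ L.layer ℓ) (h0 : (0 : F) ∉ L.S s) (x : Fin n → F) (hxs : x s ∉ L.S s) :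
    L.eval (Function.update x s 0) = L.eval x := by
  have hM : ∀ i : Fin r, L.M i (Function.update x s 0) = L.M i x := by
    intro i
    by_cases hi : i = ℓ
    · subst hi
      refine Finset.prod_congr rfl fun v hv => ?_
      by_cases hvs : v = s
      · subst hvs; simp [Qt, h0, hxs]
      · rw [Function.update_of_ne hvs]
    · exact M_update_of_ne L ℓ s hs x i hi
  unfold LayeredForm.eval
  rw [PC_update L ℓ s hs x]
  congr 1
  simp only [hM]

lemma eval_update_eq_of_mem_same (L : LayeredForm F n r) (ℓ : Fin r) (s : Fin n)
    (hs : s ∈ L.layer ℓ) (x : Fin n → F) (v : Fin n) (hv : v ∈ L.layer ℓ) (hvs : v ≠ s)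
    (hx : x v ∈ L.S v) :
    L.eval (Function.update x s 0) = L.eval x := by
  have hM : ∀ i : Fin r, L.M i (Function.update x s 0) = L.M i x := by
    intro i
    by_cases hi : i = ℓ
    · rw [hi, M_eq_zero L ℓ x v hv hx,
        M_eq_zero L ℓ (Function.update x s 0) v hv (by rwa [Function.update_of_ne hvs])]
    · exact M_update_of_ne L ℓ s hs x i hi
  unfold LayeredForm.eval
  rw [PC_update L ℓ s hs x]
  congr 1
  simp only [hM]

lemma eval_update_eq_of_mem_lt (L : LayeredForm F n r) (ℓ : Fin r) (s : Fin n)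
    (hs : s ∈ L.layer ℓ) (x : Fin n → F) (i : Fin r) (hi : i < ℓ) (v : Fin n)
    (hv : v ∈ L.layer i) (hx : x v ∈ L.S v) :
    L.eval (Function.update x s 0) = L.eval x := by
  have hiℓ : i ≠ ℓ := Fin.ne_of_lt hi
  unfold LayeredForm.eval
  refine nest_congr i.val _ _ (L.B i) _ _ (fun j hj => ?_) ?_ ?_
  · have hjr : j < r := lt_trans hj i.isLt
    have hne : (⟨j, hjr⟩ : Fin r) ≠ ℓ := by
      refine Fin.ne_of_lt (lt_trans ?_ hi)
      exact hj
    simp only [List.getElem?_ofFn, hjr, dif_pos]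
    rw [M_update_of_ne L ℓ s hs x _ hne]
  · simp only [List.getElem?_ofFn, i.isLt, dif_pos]
    rw [M_eq_zero L i (Function.update x s 0) v hv (by
      rw [Function.update_of_ne (by
        intro h; subst h
        exact (Finset.disjoint_left.mp (L.disj i ℓ hiℓ)) hv hs)]
      exact hx)]
  · simp only [List.getElem?_ofFn, i.isLt, dif_pos]
    rw [M_eq_zero L i x v hv hx]

end Aux

/-- General edge-deletion bound for a variable `s` in the `ℓ`-th layer
whose canalizing input set does not contain `0`. -/
theorem stmt6 {F : Type*} [Field F] [Fintype F] [DecidableEq F] {n r : ℕ}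
    (f : (Fin n → F) → F) (L : LayeredForm F n r) (hf : f = L.eval)
    (ℓ : Fin r) (s : Fin n) (hs : s ∈ L.layer ℓ) (h0 : (0 : F) ∉ L.S s) :
    chCount f s 0 ≤
      Fintype.card F ^ (n - ∑ i ∈ Finset.univ.filter (fun i : Fin r => i ≤ ℓ), (L.layer i).card) *
        (∏ i ∈ Finset.univ.filter (fun i : Fin r => i < ℓ),
          ∏ v ∈ L.layer i, (Fintype.card F - (L.S v).card)) *
        (∏ v ∈ (L.layer ℓ).erase s, (Fintype.card F - (L.S v).card)) *
        (L.S s).card := by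
  classical
  subst hf
  set D : Finset (Fin n) := (Finset.univ.filter fun i : Fin r => i ≤ ℓ).biUnion L.layer with hD
  set A : Fin n → Finset F := fun v =>
    if v = s then L.S s else if v ∈ D then (L.S v)ᶜ else Finset.univ with hAdef
  have hsD : s ∈ D := Finset.mem_biUnion.mpr ⟨ℓ, by simp, hs⟩
  have hsub : (Finset.univ.filter fun x : Fin n → F =>
      L.eval (Function.update x s 0) ≠ L.eval x) ⊆ Fintype.piFinset A := by
    intro x hx
    rw [Finset.mem_filter] at hx
    have hne := hx.2
    rw [Fintype.mem_piFinset]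
    intro v
    by_contra hv
    apply hne
    by_cases hvs : v = s
    · rw [hvs] at hv
      simp only [hAdef, if_pos rfl] at hv
      exact eval_update_eq_of_not_mem L ℓ s hs h0 x hv
    · by_cases hvD : v ∈ D
      · simp only [hAdef, if_neg hvs, if_pos hvD, Finset.mem_compl, not_not] at hv
        obtain ⟨i, hi, hvi⟩ := Finset.mem_biUnion.mp hvD
        rw [Finset.mem_filter] at hi
        rcases lt_or_eq_of_le hi.2 with hlt | heq
        · exact eval_update_eq_of_mem_lt L ℓ s hs x i hlt v hvi hv
        · rw [heq] at hvi
          exact eval_update_eq_of_mem_same L ℓ s hs x v hvi hvs hv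
      · simp [hAdef, hvs, hvD] at hv
  have hdisjD : ∀ i ∈ Finset.univ.filter fun i : Fin r => i ≤ ℓ,
      ∀ j ∈ Finset.univ.filter fun i : Fin r => i ≤ ℓ, i ≠ j →
      Disjoint (L.layer i) (L.layer j) := fun i _ j _ hij => L.disj i j hij
  have hcardD : D.card = ∑ i ∈ Finset.univ.filter (fun i : Fin r => i ≤ ℓ), (L.layer i).card :=
    Finset.card_biUnion hdisjD
  -- product over all variables
  have hprod : ∏ v : Fin n, (A v).card =
      Fintype.card F ^ (n - ∑ i ∈ Finset.univ.filter (fun i : Fin r => i ≤ ℓ), (L.layer i).card) *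
        (∏ i ∈ Finset.univ.filter (fun i : Fin r => i < ℓ),
          ∏ v ∈ L.layer i, (Fintype.card F - (L.S v).card)) *
        (∏ v ∈ (L.layer ℓ).erase s, (Fintype.card F - (L.S v).card)) *
        (L.S s).card := by
    rw [← Finset.prod_mul_prod_compl D (fun v => (A v).card)]
    have hcompl : ∏ v ∈ Dᶜ, (A v).card = Fintype.card F ^
        (n - ∑ i ∈ Finset.univ.filter (fun i : Fin r => i ≤ ℓ), (L.layer i).card) := by
      rw [Finset.prod_congr rfl (fun v hv => ?_), Finset.prod_const, Finset.card_compl,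
        Fintype.card_fin, hcardD]
      have hvD : v ∉ D := Finset.mem_compl.mp hv
      have hvs : v ≠ s := fun h => hvD (h ▸ hsD)
      simp [hAdef, hvs, hvD]
    -- decompose D
    have hfilter : (Finset.univ.filter fun i : Fin r => i ≤ ℓ) =
        insert ℓ (Finset.univ.filter fun i : Fin r => i < ℓ) := by
      ext i
      simp [le_iff_lt_or_eq, or_comm]
    set D' : Finset (Fin n) := (Finset.univ.filter fun i : Fin r => i < ℓ).biUnion L.layer
      with hD'
    have hDeq : D = L.layer ℓ ∪ D' := by
      rw [hD, hfilter, Finset.biUnion_insert]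
    have hdisj' : Disjoint (L.layer ℓ) D' := by
      rw [Finset.disjoint_right]
      intro a ha haℓ
      obtain ⟨i, hi, hai⟩ := Finset.mem_biUnion.mp ha
      rw [Finset.mem_filter] at hi
      exact (Finset.disjoint_left.mp (L.disj i ℓ (Fin.ne_of_lt hi.2))) hai haℓ
    have hsD' : s ∉ D' := Finset.disjoint_left.mp hdisj' hs
    have hDer : D.erase s = (L.layer ℓ).erase s ∪ D' := by
      rw [hDeq, Finset.erase_union_distrib, Finset.erase_eq_self.mpr hsD']
    have hprodD : ∏ v ∈ D, (A v).card =
        (L.S s).card * ((∏ v ∈ (L.layer ℓ).erase s, (Fintype.card F - (L.S v).card)) *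
          ∏ i ∈ Finset.univ.filter (fun i : Fin r => i < ℓ),
            ∏ v ∈ L.layer i, (Fintype.card F - (L.S v).card)) := by
      rw [← Finset.insert_erase hsD, Finset.prod_insert (Finset.notMem_erase s _)]
      congr 1
      · simp [hAdef]
      · have hstep : ∀ v ∈ D.erase s, (A v).card = Fintype.card F - (L.S v).card := by
          intro v hv
          have hvs : v ≠ s := Finset.ne_of_mem_erase hv
          have hvD : v ∈ D := Finset.mem_of_mem_erase hv
          simp [hAdef, hvs, hvD, Finset.card_compl]
        rw [Finset.prod_congr rfl hstep, hDer,
          Finset.prod_union (Finset.disjoint_of_subset_left (Finset.erase_subset s _) hdisj'),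
          Finset.prod_biUnion (fun i hi j hj hij => L.disj i j hij)]
    rw [hcompl, hprodD]
    ring
  calc chCount L.eval s 0
      ≤ (Fintype.piFinset A).card := Finset.card_le_card hsub
    _ = ∏ v : Fin n, (A v).card := Fintype.card_piFinset A
    _ = _ := hprod
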